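/- Given a finite probability space with a binary outcome y, binary decision δ, and group attribute a taking two values, if an algorithm satisfies both predictive parity (equal PPV and NPV across groups) and error rate balance (equal TPR and TNR across groups), then either the predictor is perfect (Pr[y=1 | a, x] ∈ {0,1} for all trait profiles) or the groups have equal base rates (Pr[y=1 | a] is the same for both groups). -/

import Mathlib

open scoped Classical

noncomputable def pr {Ω : Type*} [Fintype Ω] (P : Ω → ℝ) (A : Ω → Prop) : ℝ :=
  ∑ ω, if A ω then P ω else 0

noncomputable def cpr {Ω : Type*} [Fintype Ω] (P : Ω → ℝ) (A B : Ω → Prop) : ℝ :=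
  pr P (fun ω => A ω ∧ B ω) / pr P B

lemma pr_congr {Ω : Type*} [Fintype Ω] (P : Ω → ℝ) {A B : Ω → Prop}
    (h : ∀ ω, A ω ↔ B ω) : pr P A = pr P B := by
  unfold pr
  refine Finset.sum_congr rfl fun ω _ => ?_
  by_cases hA : A ω
  · rw [if_pos hA, if_pos ((h ω).1 hA)]
  · rw [if_neg hA, if_neg (fun hB => hA ((h ω).2 hB))]

lemma pr_split {Ω : Type*} [Fintype Ω] (P : Ω → ℝ) (b : Ω → Bool) (A : Ω → Prop) :
    pr P A = pr P (fun ω => b ω = true ∧ A ω) + pr P (fun ω => b ω = false ∧ A ω) := by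
  unfold pr
  rw [← Finset.sum_add_distrib]
  refine Finset.sum_congr rfl fun ω _ => ?_
  cases hb : b ω <;> by_cases hA : A ω <;> simp [hb, hA]

lemma cpr_eq {Ω : Type*} [Fintype Ω] (P : Ω → ℝ) (A B : Ω → Prop) :
    cpr P A B = pr P (fun ω => A ω ∧ B ω) / pr P B := rfl

lemma alg (p n D10 D11 D00 D01 : ℝ)
    (h10 : 0 < D10) (h11 : 0 < D11) (h00 : 0 < D00) (h01 : 0 < D01)
    (hY10 : 0 < p*D10 + (1-n)*D00) (hY11 : 0 < p*D11 + (1-n)*D01)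
    (hY00 : 0 < (1-p)*D10 + n*D00) (hY01 : 0 < (1-p)*D11 + n*D01)
    (htpr : p*D10 / (p*D10 + (1-n)*D00) = p*D11 / (p*D11 + (1-n)*D01))
    (htnr : n*D00 / ((1-p)*D10 + n*D00) = n*D01 / ((1-p)*D11 + n*D01)) :
    ((p = 0 ∧ n = 0) ∨ (p = 1 ∧ n = 1)) ∨
    (p*D10 + (1-n)*D00)/(D10+D00) = (p*D11 + (1-n)*D01)/(D11+D01) := by
  rw [div_eq_div_iff hY10.ne' hY11.ne'] at htpr
  rw [div_eq_div_iff hY00.ne' hY01.ne'] at htnr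
  have h1 : p*(1-n)*(D10*D01 - D11*D00) = 0 := by linear_combination htpr
  have h2 : n*(1-p)*(D00*D11 - D01*D10) = 0 := by linear_combination htnr
  by_cases hK : D10*D01 - D11*D00 = 0
  · right
    rw [div_eq_div_iff (by positivity) (by positivity)]
    linear_combination (p - 1 + n) * hK
  · left
    have e1 : p * (1-n) = 0 := by
      rcases mul_eq_zero.1 h1 with h|h
      · exact h
      · exact absurd h hK
    have e2 : n * (1-p) = 0 := by
      rcases mul_eq_zero.1 h2 with h|h
      · exact h
      · exact absurd (by linarith : D10*D01 - D11*D00 = 0) hK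
    rcases mul_eq_zero.1 e1 with hp|hn
    · rcases mul_eq_zero.1 e2 with hn'|hp'
      · exact Or.inl ⟨hp, hn'⟩
      · exact absurd (by linarith : (0:ℝ) = 1) (by norm_num)
    · rcases mul_eq_zero.1 e2 with hn'|hp'
      · exact absurd (by linarith : (0:ℝ) = 1) (by norm_num)
      · exact Or.inr ⟨by linarith, by linarith⟩

/-- Impossibility theorem (Kleinberg–Mullainathan–Raghavan): predictive parity plus
error rate balance implies a perfect predictor or equal base rates. -/
theorem stmt_0 {Ω : Type*} [Fintype Ω] (P : Ω → ℝ) (y δ a : Ω → Bool)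
    (hP : ∀ ω, 0 ≤ P ω) (hsum : ∑ ω, P ω = 1)
    (hδpos : ∀ g d, 0 < pr P (fun ω => δ ω = d ∧ a ω = g))
    (hypos : ∀ g d, 0 < pr P (fun ω => y ω = d ∧ a ω = g))
    (hPPV : cpr P (fun ω => y ω = true) (fun ω => δ ω = true ∧ a ω = false)
          = cpr P (fun ω => y ω = true) (fun ω => δ ω = true ∧ a ω = true))
    (hNPV : cpr P (fun ω => y ω = false) (fun ω => δ ω = false ∧ a ω = false)
          = cpr P (fun ω => y ω = false) (fun ω => δ ω = false ∧ a ω = true))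
    (hTPR : cpr P (fun ω => δ ω = true) (fun ω => y ω = true ∧ a ω = false)
          = cpr P (fun ω => δ ω = true) (fun ω => y ω = true ∧ a ω = true))
    (hTNR : cpr P (fun ω => δ ω = false) (fun ω => y ω = false ∧ a ω = false)
          = cpr P (fun ω => δ ω = false) (fun ω => y ω = false ∧ a ω = true)) :
    (∀ d g, cpr P (fun ω => y ω = true) (fun ω => δ ω = d ∧ a ω = g) = 0 ∨
            cpr P (fun ω => y ω = true) (fun ω => δ ω = d ∧ a ω = g) = 1) ∨
    cpr P (fun ω => y ω = true) (fun ω => a ω = false)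
      = cpr P (fun ω => y ω = true) (fun ω => a ω = true) := by
  classical
  simp only [cpr] at hPPV hNPV hTPR hTNR ⊢
  -- reorder conjunctions in TPR/TNR numerators
  have eTPR : ∀ g : Bool, pr P (fun ω => δ ω = true ∧ (y ω = true ∧ a ω = g))
      = pr P (fun ω => y ω = true ∧ (δ ω = true ∧ a ω = g)) :=
    fun g => pr_congr P (fun ω => by tauto)
  have eTNR : ∀ g : Bool, pr P (fun ω => δ ω = false ∧ (y ω = false ∧ a ω = g))
      = pr P (fun ω => y ω = false ∧ (δ ω = false ∧ a ω = g)) :=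
    fun g => pr_congr P (fun ω => by tauto)
  rw [eTPR false, eTPR true] at hTPR
  rw [eTNR false, eTNR true] at hTNR
  -- positivity
  have hD1f := hδpos false true
  have hD1t := hδpos true true
  have hD0f := hδpos false false
  have hD0t := hδpos true false
  have hY1f := hypos false true
  have hY1t := hypos true true
  have hY0f := hypos false false
  have hY0t := hypos true false
  -- names
  set D1f := pr P (fun ω => δ ω = true ∧ a ω = false) with hD1f_def
  set D1t := pr P (fun ω => δ ω = true ∧ a ω = true) with hD1t_def
  set D0f := pr P (fun ω => δ ω = false ∧ a ω = false) with hD0f_def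
  set D0t := pr P (fun ω => δ ω = false ∧ a ω = true) with hD0t_def
  set Tf := pr P (fun ω => y ω = true ∧ (δ ω = true ∧ a ω = false)) with hTf_def
  set Tt := pr P (fun ω => y ω = true ∧ (δ ω = true ∧ a ω = true)) with hTt_def
  set Nf := pr P (fun ω => y ω = false ∧ (δ ω = false ∧ a ω = false)) with hNf_def
  set Nt := pr P (fun ω => y ω = false ∧ (δ ω = false ∧ a ω = true)) with hNt_def
  set FNf := pr P (fun ω => y ω = true ∧ (δ ω = false ∧ a ω = false)) with hFNf_def
  set FNt := pr P (fun ω => y ω = true ∧ (δ ω = false ∧ a ω = true)) with hFNt_def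
  set FPf := pr P (fun ω => y ω = false ∧ (δ ω = true ∧ a ω = false)) with hFPf_def
  set FPt := pr P (fun ω => y ω = false ∧ (δ ω = true ∧ a ω = true)) with hFPt_def
  set Y1f := pr P (fun ω => y ω = true ∧ a ω = false) with hY1f_def
  set Y1t := pr P (fun ω => y ω = true ∧ a ω = true) with hY1t_def
  set Y0f := pr P (fun ω => y ω = false ∧ a ω = false) with hY0f_def
  set Y0t := pr P (fun ω => y ω = false ∧ a ω = true) with hY0t_def
  set Af := pr P (fun ω => a ω = false) with hAf_def
  set At := pr P (fun ω => a ω = true) with hAt_def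
  have hs00 : D0f = FNf + Nf := pr_split P y (fun ω => δ ω = false ∧ a ω = false)
  have hs01 : D0t = FNt + Nt := pr_split P y (fun ω => δ ω = false ∧ a ω = true)
  have hs10 : D1f = Tf + FPf := pr_split P y (fun ω => δ ω = true ∧ a ω = false)
  have hs11 : D1t = Tt + FPt := pr_split P y (fun ω => δ ω = true ∧ a ω = true)
  have hsY1f : Y1f = Tf + FNf := by
    rw [hY1f_def, pr_split P δ (fun ω => y ω = true ∧ a ω = false)]
    congr 1 <;> exact pr_congr P (fun ω => by tauto)
  have hsY1t : Y1t = Tt + FNt := by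
    rw [hY1t_def, pr_split P δ (fun ω => y ω = true ∧ a ω = true)]
    congr 1 <;> exact pr_congr P (fun ω => by tauto)
  have hsY0f : Y0f = FPf + Nf := by
    rw [hY0f_def, pr_split P δ (fun ω => y ω = false ∧ a ω = false)]
    congr 1 <;> exact pr_congr P (fun ω => by tauto)
  have hsY0t : Y0t = FPt + Nt := by
    rw [hY0t_def, pr_split P δ (fun ω => y ω = false ∧ a ω = true)]
    congr 1 <;> exact pr_congr P (fun ω => by tauto)
  have hsAf : Af = D1f + D0f := pr_split P δ (fun ω => a ω = false)
  have hsAt : At = D1t + D0t := pr_split P δ (fun ω => a ω = true)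
  -- define p and n
  set p := Tf / D1f with hp_def
  set n := Nf / D0f with hn_def
  have hpTf : Tf = p * D1f := by rw [hp_def]; field_simp
  have hpTt : Tt = p * D1t := by
    rw [hPPV]; field_simp
  have hnNf : Nf = n * D0f := by rw [hn_def]; field_simp
  have hnNt : Nt = n * D0t := by
    rw [hNPV]; field_simp
  have hFNf : FNf = (1 - n) * D0f := by
    rw [hnNf] at hs00; linear_combination -hs00
  have hFNt : FNt = (1 - n) * D0t := by
    rw [hnNt] at hs01; linear_combination -hs01
  have hFPf : FPf = (1 - p) * D1f := by
    rw [hpTf] at hs10; linear_combination -hs10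
  have hFPt : FPt = (1 - p) * D1t := by
    rw [hpTt] at hs11; linear_combination -hs11
  have hY1fe : Y1f = p * D1f + (1 - n) * D0f := by
    rw [hsY1f, hpTf, hFNf]
  have hY1te : Y1t = p * D1t + (1 - n) * D0t := by
    rw [hsY1t, hpTt, hFNt]
  have hY0fe : Y0f = (1 - p) * D1f + n * D0f := by
    rw [hsY0f, hFPf, hnNf]
  have hY0te : Y0t = (1 - p) * D1t + n * D0t := by
    rw [hsY0t, hFPt, hnNt]
  have halg := alg p n D1f D1t D0f D0t hD1f hD1t hD0f hD0t
    (hY1fe ▸ hY1f) (hY1te ▸ hY1t) (hY0fe ▸ hY0f) (hY0te ▸ hY0t)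
    (by rw [← hY1fe, ← hY1te, ← hpTf, ← hpTt]; exact hTPR)
    (by rw [← hY0fe, ← hY0te, ← hnNf, ← hnNt]; exact hTNR)
  rcases halg with (⟨hp0, hn0⟩ | ⟨hp1, hn1⟩) | heq
  · left
    intro d g
    cases d <;> cases g
    · right; rw [← hFNf_def, ← hD0f_def, hFNf, hn0]; field_simp; norm_num
    · right; rw [← hFNt_def, ← hD0t_def, hFNt, hn0]; field_simp; norm_num
    · left; rw [← hTf_def, ← hD1f_def, hpTf, hp0]; simp
    · left; rw [← hTt_def, ← hD1t_def, hpTt, hp0]; simp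
  · left
    intro d g
    cases d <;> cases g
    · left; rw [← hFNf_def, ← hD0f_def, hFNf, hn1]; simp
    · left; rw [← hFNt_def, ← hD0t_def, hFNt, hn1]; simp
    · right; rw [← hTf_def, ← hD1f_def, hpTf, hp1]; field_simp
    · right; rw [← hTt_def, ← hD1t_def, hpTt, hp1]; field_simp
  · right
    rw [hY1fe, hY1te, hsAf, hsAt]
    exact heq
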